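/- For every integer M ≥ 8, ∑_{k=1}^{M} (1/(M+1))·(1 − k/(M+1))·cot(πk/(M+1)) < (1/π)·( log(M/2) + γ + 1/(M + 1/3) ), where γ is the Euler–Mascheroni constant. -/

import Mathlib

open Real Finset

lemma cot_lt_inv {x : ℝ} (hx0 : 0 < x) (hxπ : x < Real.pi) : Real.cot x < 1 / x := by
  have hsin : 0 < Real.sin x := Real.sin_pos_of_pos_of_lt_pi hx0 hxπ
  rcases lt_or_ge x (Real.pi/2) with h | h
  · have hcos : 0 < Real.cos x := Real.cos_pos_of_mem_Ioo ⟨by linarith [Real.pi_pos], h⟩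
    have htan : x < Real.tan x := Real.lt_tan hx0 h
    rw [Real.tan_eq_sin_div_cos, lt_div_iff₀ hcos] at htan
    rw [Real.cot_eq_cos_div_sin, div_lt_div_iff₀ hsin hx0]
    nlinarith
  · have hcos : Real.cos x ≤ 0 := Real.cos_nonpos_of_pi_div_two_le_of_le h (by linarith [Real.pi_pos])
    have : Real.cot x ≤ 0 := by
      rw [Real.cot_eq_cos_div_sin]
      exact div_nonpos_of_nonpos_of_nonneg hcos hsin.le
    calc Real.cot x ≤ 0 := this
      _ < 1 / x := by positivity

theorem cot_sum_lt_harmonic_bound (M : ℕ) (hM : 8 ≤ M) :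
    ∑ k ∈ Finset.Icc 1 M,
        (1 / ((M : ℝ) + 1)) * (1 - (k : ℝ) / (M + 1)) *
          Real.cot (Real.pi * ((k : ℝ) / (M + 1))) <
      1 / Real.pi * (Real.log ((M : ℝ) / 2) + Real.eulerMascheroniConstant
        + 1 / ((M : ℝ) + 1 / 3)) := by
  have hπ := Real.pi_pos
  have hM8 : (8:ℝ) ≤ (M:ℝ) := by exact_mod_cast hM
  have hM1 : (0:ℝ) < (M:ℝ) + 1 := by linarith
  have hM0 : (0:ℝ) < (M:ℝ) := by linarith
  -- termwise bound
  have key : ∀ k ∈ Finset.Icc 1 M,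
      (1 / ((M : ℝ) + 1)) * (1 - (k : ℝ) / (M + 1)) * Real.cot (Real.pi * ((k : ℝ) / (M + 1)))
      < 1 / Real.pi * (1/(k:ℝ) - 1/((M:ℝ)+1)) := by
    intro k hk
    obtain ⟨hk1, hkM⟩ := Finset.mem_Icc.mp hk
    have hk0 : (0:ℝ) < (k:ℝ) := by exact_mod_cast hk1
    have hkM' : (k:ℝ) ≤ (M:ℝ) := by exact_mod_cast hkM
    have hfrac : (0:ℝ) < (k:ℝ)/((M:ℝ)+1) := by positivity
    have hfrac1 : (k:ℝ)/((M:ℝ)+1) < 1 := by rw [div_lt_one hM1]; linarith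
    have hx0 : 0 < Real.pi * ((k : ℝ) / (M + 1)) := by positivity
    have hxπ : Real.pi * ((k : ℝ) / (M + 1)) < Real.pi := by nlinarith
    have hcot := cot_lt_inv hx0 hxπ
    have hc : 0 < (1 / ((M : ℝ) + 1)) * (1 - (k : ℝ) / (M + 1)) := by
      have : 0 < 1 - (k:ℝ)/((M:ℝ)+1) := by linarith
      positivity
    calc (1 / ((M : ℝ) + 1)) * (1 - (k : ℝ) / (M + 1)) * Real.cot (Real.pi * ((k : ℝ) / (M + 1)))
        < (1 / ((M : ℝ) + 1)) * (1 - (k : ℝ) / (M + 1)) * (1 / (Real.pi * ((k : ℝ) / (M + 1)))) :=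
          by exact mul_lt_mul_of_pos_left hcot hc
      _ = 1 / Real.pi * (1/(k:ℝ) - 1/((M:ℝ)+1)) := by
          field_simp
  have hne : (Finset.Icc 1 M).Nonempty := ⟨1, Finset.mem_Icc.mpr ⟨le_refl 1, by omega⟩⟩
  have hsum := Finset.sum_lt_sum_of_nonempty hne key
  refine hsum.trans_le ?_
  -- evaluate the RHS sum
  have hsplit : ∑ k ∈ Finset.Icc 1 M, (1 / Real.pi * (1/(k:ℝ) - 1/((M:ℝ)+1)))
      = 1 / Real.pi * ((harmonic M : ℝ) - (M:ℝ)/((M:ℝ)+1)) := by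
    rw [← Finset.mul_sum, Finset.sum_sub_distrib, Finset.sum_const, Nat.card_Icc]
    have hh : (harmonic M : ℝ) = ∑ k ∈ Finset.Icc 1 M, (1/(k:ℝ)) := by
      rw [harmonic]
      push_cast
      rw [show Finset.Icc 1 M = Finset.Ico 1 (M+1) by rw [Finset.Ico_add_one_right_eq_Icc],
        Finset.sum_Ico_eq_sum_range]
      simp [one_div, add_comm]
    rw [hh]
    simp only [Nat.add_sub_cancel, nsmul_eq_mul]
    ring
  rw [hsplit]
  have hharm : (harmonic M : ℝ) < Real.log ((M:ℝ)+1) + Real.eulerMascheroniConstant := by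
    have := Real.eulerMascheroniSeq_lt_eulerMascheroniConstant M
    rw [Real.eulerMascheroniSeq] at this
    linarith
  have hlog : Real.log ((M:ℝ)+1) ≤ Real.log (M:ℝ) + 1/(M:ℝ) := by
    have h1 : Real.log ((M:ℝ)+1) - Real.log (M:ℝ) = Real.log (((M:ℝ)+1)/(M:ℝ)) := by
      rw [Real.log_div (by linarith) (by linarith)]
    have h2 : Real.log (((M:ℝ)+1)/(M:ℝ)) ≤ ((M:ℝ)+1)/(M:ℝ) - 1 :=
      Real.log_le_sub_one_of_pos (by positivity)
    have h3 : ((M:ℝ)+1)/(M:ℝ) - 1 = 1/(M:ℝ) := by field_simp; ring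
    linarith
  have hlog2 : Real.log ((M:ℝ)/2) = Real.log (M:ℝ) - Real.log 2 :=
    Real.log_div (by linarith) (by norm_num)
  have hl2 : Real.log 2 < 0.6931471808 := Real.log_two_lt_d9
  have h8 : 1/(M:ℝ) ≤ 1/8 := by
    rw [div_le_div_iff₀ hM0 (by norm_num)]; linarith
  have h9 : 1/((M:ℝ)+1) ≤ 1/9 := by
    rw [div_le_div_iff₀ hM1 (by norm_num)]; linarith
  have hMM : (M:ℝ)/((M:ℝ)+1) = 1 - 1/((M:ℝ)+1) := by field_simp; ring
  have hpos : (0:ℝ) ≤ 1/((M:ℝ)+1/3) := by positivity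
  have hmain : (harmonic M : ℝ) - (M:ℝ)/((M:ℝ)+1)
      < Real.log ((M : ℝ) / 2) + Real.eulerMascheroniConstant + 1 / ((M : ℝ) + 1 / 3) := by
    rw [hlog2, hMM]
    linarith
  have hπinv : (0:ℝ) < 1 / Real.pi := by positivity
  exact le_of_lt (mul_lt_mul_of_pos_left hmain hπinv)
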